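/- arXiv:2104.03733 — 6 statements merged into one kernel-verified Lean document; each statement's English description precedes it below -/
import Mathlib

section
/- Let $d \geq 1$, $0 < s < d$, and let $\mu$ be a signed Borel measure on $\mathbb{R}^d$ of finite total variation. If for each point $x$ in a Borel set $A \subseteq \mathbb{R}^d$ there exists a sequence $t_n \downarrow 0$ with $\mu(B(x,t_n)) \geq 0$, then the restriction $\mu|_A$ is a non-negative measure. -/
open MeasureTheory Metric Filter
open scoped ENNReal

lemma aux_ball_iUnion {α : Type*} [PseudoMetricSpace α] (x : α) {T : ℝ} (hT : 0 < T) :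
    (⋃ m : ℕ, closedBall x (T - T / (m + 2))) = ball x T := by
  ext y
  simp only [Set.mem_iUnion, mem_closedBall, mem_ball]
  constructor
  · rintro ⟨m, hm⟩
    have : 0 < T / (m + 2) := by positivity
    linarith
  · intro hy
    obtain ⟨m, hm⟩ := exists_nat_gt (T / (T - dist y x))
    have h1 : 0 < T - dist y x := by linarith
    have h2 : T < (m : ℝ) * (T - dist y x) := (div_lt_iff₀ h1).mp hm
    refine ⟨m, ?_⟩
    have h3 : T / (m + 2) < T - dist y x := by
      rw [div_lt_iff₀ (by positivity)]
      nlinarith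
    linarith

theorem stmt0 (d : ℕ) (hd : 1 ≤ d) (s : ℝ) (hs : 0 < s) (hsd : s < d)
    (μ : MeasureTheory.SignedMeasure (EuclideanSpace ℝ (Fin d)))
    (A : Set (EuclideanSpace ℝ (Fin d))) (hA : MeasurableSet A)
    (h : ∀ x ∈ A, ∃ t : ℕ → ℝ, (∀ n, 0 < t n) ∧ StrictAnti t ∧
      Tendsto t atTop (nhds 0) ∧ ∀ n, 0 ≤ μ (ball x (t n))) :
    ∀ E : Set (EuclideanSpace ℝ (Fin d)), MeasurableSet E → E ⊆ A → 0 ≤ μ E := by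
  classical
  set j := μ.toJordanDecomposition with hj
  set p := j.posPart with hp
  set n := j.negPart with hn
  have hμval : ∀ (i : Set (EuclideanSpace ℝ (Fin d))), MeasurableSet i →
      μ i = (p i).toReal - (n i).toReal := by
    intro i hi
    conv_lhs => rw [← μ.toSignedMeasure_toJordanDecomposition]
    rw [JordanDecomposition.toSignedMeasure, Measure.toSignedMeasure_sub_apply hi]
    rfl
  set v := Besicovitch.vitaliFamily (n : Measure _) with hv
  have h1 : ∀ᵐ x ∂n, Tendsto (fun r : ℝ => p (closedBall x r) / n (closedBall x r))
      (nhdsWithin 0 (Set.Ioi 0)) (nhds 0) := by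
    filter_upwards [v.ae_eventually_measure_zero_of_singular j.mutuallySingular] with x hx
    exact hx.comp (Besicovitch.tendsto_filterAt n x)
  have h2 : ∀ᵐ x ∂n, ∀ᶠ r in nhdsWithin (0:ℝ) (Set.Ioi 0), 0 < n (closedBall x r) := by
    filter_upwards [v.ae_eventually_measure_pos] with x hx
    exact (Besicovitch.tendsto_filterAt n x).eventually hx
  have key : n A = 0 := by
    have hcontra : ∀ x ∈ A, ¬ (Tendsto (fun r : ℝ => p (closedBall x r) / n (closedBall x r))
        (nhdsWithin 0 (Set.Ioi 0)) (nhds 0) ∧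
        ∀ᶠ r in nhdsWithin (0:ℝ) (Set.Ioi 0), 0 < n (closedBall x r)) := by
      rintro x hx ⟨hlim, hpos⟩
      obtain ⟨t, ht_pos, ht_anti, ht_lim, ht_nonneg⟩ := h x hx
      have hball : ∀ k, n (ball x (t k)) ≤ p (ball x (t k)) := by
        intro k
        have := ht_nonneg k
        rw [hμval _ measurableSet_ball] at this
        have hfin : n (ball x (t k)) ≠ ⊤ := measure_ne_top _ _
        have hfin' : p (ball x (t k)) ≠ ⊤ := measure_ne_top _ _
        exact (ENNReal.toReal_le_toReal hfin hfin').mp (by linarith)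
      have hev : ∀ᶠ r in nhdsWithin (0:ℝ) (Set.Ioi 0),
          (p (closedBall x r) < (1/2 : ℝ≥0∞) * n (closedBall x r) ∧
            0 < n (closedBall x r)) := by
        have hlt : ∀ᶠ r in nhdsWithin (0:ℝ) (Set.Ioi 0),
            p (closedBall x r) / n (closedBall x r) < 1/2 :=
          hlim (gt_mem_nhds (by norm_num : (0:ℝ≥0∞) < 1/2))
        filter_upwards [hlt, hpos] with r hr hr'
        refine ⟨?_, hr'⟩
        rwa [ENNReal.div_lt_iff (Or.inl hr'.ne') (Or.inl (measure_ne_top _ _))] at hr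
      obtain ⟨r₀, hr₀, hIoc⟩ := mem_nhdsGT_iff_exists_Ioc_subset.1 hev
      have hr₀' : (0:ℝ) < r₀ := hr₀
      obtain ⟨k, hk⟩ : ∃ k, t k < r₀ := (ht_lim.eventually (gt_mem_nhds hr₀')).exists
      set T := t k with hTdef
      have hT : 0 < T := ht_pos k
      -- p (ball x T) ≤ (1/2) n (ball x T)
      have hsubball : ∀ m : ℕ, closedBall x (T - T / (m + 2)) ⊆ ball x T := by
        intro m
        apply closedBall_subset_ball
        have : 0 < T / (m + 2) := by positivity
        linarith
      have hrm : ∀ m : ℕ, (T - T / (m + 2)) ∈ Set.Ioc (0:ℝ) r₀ := by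
        intro m
        constructor
        · have h2 : T / (m + 2) ≤ T / 2 := by
            apply div_le_div_of_nonneg_left hT.le (by norm_num) (by push_cast; linarith)
          have : 0 < T / 2 := by positivity
          linarith
        · have : 0 < T / (m + 2) := by positivity
          linarith
      have hpb : p (ball x T) ≤ (1/2 : ℝ≥0∞) * n (ball x T) := by
        have hmono : Monotone (fun m : ℕ => closedBall x (T - T / (m + 2))) := by
          intro a b hab
          apply closedBall_subset_closedBall
          have hab2 : (a:ℝ) + 2 ≤ (b:ℝ) + 2 := by exact_mod_cast Nat.add_le_add_right hab 2
          have := div_le_div_of_nonneg_left hT.le (by positivity : (0:ℝ) < (a:ℝ) + 2) hab2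
          linarith
        have htend := tendsto_measure_iUnion_atTop (μ := p) hmono
        rw [aux_ball_iUnion x hT] at htend
        refine le_of_tendsto htend (Filter.Eventually.of_forall fun m => ?_)
        calc p (closedBall x (T - T / (m + 2)))
            ≤ (1/2 : ℝ≥0∞) * n (closedBall x (T - T / (m + 2))) := (hIoc (hrm m)).1.le
          _ ≤ (1/2 : ℝ≥0∞) * n (ball x T) := mul_le_mul_right (measure_mono (hsubball m)) _
      have hnb : n (ball x T) ≤ (1/2 : ℝ≥0∞) * n (ball x T) := (hball k).trans hpb
      have hposT : 0 < n (ball x T) := by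
        have hmem : (T/2 : ℝ) ∈ Set.Ioc (0:ℝ) r₀ := ⟨by positivity, by linarith⟩
        have := (hIoc hmem).2
        exact this.trans_le (measure_mono (closedBall_subset_ball (by linarith)))
      have hfin : n (ball x T) ≠ ⊤ := measure_ne_top _ _
      have hle := ENNReal.toReal_mono (ENNReal.mul_ne_top (by norm_num) hfin) hnb
      rw [ENNReal.toReal_mul] at hle
      have hhalf : ((1/2 : ℝ≥0∞)).toReal = 1/2 := by norm_num
      rw [hhalf] at hle
      have hcpos : 0 < (n (ball x T)).toReal := ENNReal.toReal_pos hposT.ne' hfin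
      linarith
    have hsub : A ⊆ {x | ¬ (Tendsto (fun r : ℝ => p (closedBall x r) / n (closedBall x r))
        (nhdsWithin 0 (Set.Ioi 0)) (nhds 0) ∧
        ∀ᶠ r in nhdsWithin (0:ℝ) (Set.Ioi 0), 0 < n (closedBall x r))} := hcontra
    have hae := (h1.and h2)
    rw [ae_iff] at hae
    exact measure_mono_null hsub hae
  intro E hE hEA
  rw [hμval E hE]
  have hnE : n E = 0 := le_antisymm ((measure_mono hEA).trans key.le) (zero_le)
  rw [hnE]
  simp [ENNReal.toReal_nonneg]
end

section
/- Let $0 < s < d$ and let $\mu, \mu^*$ be as in the Kelvin transform setting (with $\mu^*$ the pushforward under $T$ of $\frac{(2y_{d+1})^{s/2}}{|t-y|^s}d\mu(t)$). Then the Riesz $s$-energies coincide: $I_s(\mu^*) = I_s(\mu)$, where $I_s(\sigma) = \iint |x-t|^{-s} d\sigma(x) d\sigma(t)$. -/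
open MeasureTheory

lemma keyreal (k A B r s : ℝ) (hk : 0 < k) (hA : 0 < A) (hB : 0 < B) (hr : 0 ≤ r) :
    k ^ (s / 2) / A ^ s * (k ^ (s / 2) / B ^ s * (k / (A * B) * r) ^ (-s)) = r ^ (-s) := by
  have h1 : (k / (A * B) * r) ^ (-s) = k ^ (-s) * (A ^ s * B ^ s) * r ^ (-s) := by
    rw [Real.mul_rpow (by positivity) hr, Real.div_rpow hk.le (by positivity),
      Real.mul_rpow hA.le hB.le, Real.rpow_neg hA.le, Real.rpow_neg hB.le]
    field_simp
  have h2 : k ^ (s / 2) * k ^ (s / 2) = k ^ s := by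
    rw [← Real.rpow_add hk, add_halves]
  have h3 : k ^ s * k ^ (-s) = 1 := by
    rw [← Real.rpow_add hk, add_neg_cancel, Real.rpow_zero]
  have hAs : A ^ s ≠ 0 := (Real.rpow_pos_of_pos hA s).ne'
  have hBs : B ^ s ≠ 0 := (Real.rpow_pos_of_pos hB s).ne'
  rw [h1]
  field_simp
  linear_combination (k ^ (-s) * r ^ (-s)) * h2 + (r ^ (-s)) * h3

theorem stmt4 (d : ℕ) (hd : 2 ≤ d) (s : ℝ) (hs : 0 < s) (hsd : s < (d : ℝ))
    (y : EuclideanSpace ℝ (Fin (d + 1))) (c : ℝ) (hc : 0 < c) (hyc : y (Fin.last d) = c)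
    (T : EuclideanSpace ℝ (Fin (d + 1)) → EuclideanSpace ℝ (Fin (d + 1)))
    (hT : ∀ x, T x = y + ((2 * c) / ‖x - y‖ ^ 2) • (x - y))
    (μ : Measure (EuclideanSpace ℝ (Fin (d + 1)))) (hμy : μ {y} = 0)
    (μstar : Measure (EuclideanSpace ℝ (Fin (d + 1))))
    (hμstar : μstar =
      (μ.withDensity fun t => ENNReal.ofReal ((2 * c) ^ (s / 2) / ‖t - y‖ ^ s)).map T) :
    ∫⁻ x, ∫⁻ t, ENNReal.ofReal (‖x - t‖ ^ (-s)) ∂μstar ∂μstar =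
      ∫⁻ x, ∫⁻ t, ENNReal.ofReal (‖x - t‖ ^ (-s)) ∂μ ∂μ := by
  have hk : (0:ℝ) < 2 * c := by linarith
  have hTy : T y = y := by
    rw [hT]; simp
  -- T is an involution
  have hTT : ∀ x, T (T x) = x := by
    intro x
    by_cases hx : x = y
    · rw [hx, hTy, hTy]
    · have hv : (0:ℝ) < ‖x - y‖ := by
        rwa [norm_pos_iff, sub_ne_zero]
      have ha : (0:ℝ) < 2 * c / ‖x - y‖ ^ 2 := by positivity
      rw [hT (T x), hT x, add_sub_cancel_left, norm_smul, smul_smul,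
        Real.norm_eq_abs, abs_of_pos ha]
      have hcoef : 2 * c / (2 * c / ‖x - y‖ ^ 2 * ‖x - y‖) ^ 2 * (2 * c / ‖x - y‖ ^ 2) = 1 := by
        field_simp
      rw [hcoef, one_smul, add_sub_cancel]
  -- measurability of T
  have hTm : Measurable T := by
    have hfe : T = fun x => y + ((2 * c) / ‖x - y‖ ^ 2) • (x - y) := funext hT
    rw [hfe]
    fun_prop
  -- the measurable equivalence
  let e : EuclideanSpace ℝ (Fin (d + 1)) ≃ᵐ EuclideanSpace ℝ (Fin (d + 1)) :=
    ⟨⟨T, T, hTT, hTT⟩, hTm, hTm⟩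
  set g : EuclideanSpace ℝ (Fin (d + 1)) → ENNReal :=
    fun t => ENNReal.ofReal ((2 * c) ^ (s / 2) / ‖t - y‖ ^ s) with hg
  have hgm : Measurable g := by
    apply Measurable.ennreal_ofReal
    exact measurable_const.div
      (((continuous_id.sub continuous_const).norm.rpow_const
        (fun x => Or.inr hs.le)).measurable)
  have hgfin : ∀ᵐ x ∂μ, g x < ⊤ := Filter.Eventually.of_forall fun x => ENNReal.ofReal_lt_top
  set ν : Measure (EuclideanSpace ℝ (Fin (d + 1))) := μ.withDensity g with hν
  have hmap : μstar = Measure.map e ν := hμstar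
  -- distance identity
  have hdist : ∀ x t : EuclideanSpace ℝ (Fin (d + 1)), x ≠ y → t ≠ y →
      ‖T x - T t‖ = 2 * c / (‖x - y‖ * ‖t - y‖) * ‖x - t‖ := by
    intro x t hx ht
    have hR : (Real.sqrt (2 * c)) ^ 2 = 2 * c := Real.sq_sqrt hk.le
    have hTinv : ∀ z, T z = EuclideanGeometry.inversion y (Real.sqrt (2 * c)) z := by
      intro z
      rw [hT, EuclideanGeometry.inversion]
      simp only [vsub_eq_sub, vadd_eq_add, div_pow, hR, dist_eq_norm]
      exact add_comm _ _
    rw [← dist_eq_norm, hTinv, hTinv,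
      EuclideanGeometry.dist_inversion_inversion hx ht, hR, dist_eq_norm, dist_eq_norm,
      dist_eq_norm]
  -- a.e. x ≠ y
  have hae : ∀ᵐ x ∂μ, x ≠ y := by
    rw [ae_iff]
    simpa using hμy
  -- pointwise key identity
  have hkey : ∀ x t : EuclideanSpace ℝ (Fin (d + 1)), x ≠ y → t ≠ y →
      g x * (g t * ENNReal.ofReal (‖T x - T t‖ ^ (-s))) = ENNReal.ofReal (‖x - t‖ ^ (-s)) := by
    intro x t hx ht
    have hA : (0:ℝ) < ‖x - y‖ := by rwa [norm_pos_iff, sub_ne_zero]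
    have hB : (0:ℝ) < ‖t - y‖ := by rwa [norm_pos_iff, sub_ne_zero]
    rw [hdist x t hx ht, hg]
    rw [← ENNReal.ofReal_mul (by positivity), ← ENNReal.ofReal_mul (by positivity)]
    congr 1
    exact keyreal (2 * c) ‖x - y‖ ‖t - y‖ ‖x - t‖ s hk hA hB (norm_nonneg _)
  have hgtop : ∀ x, g x ≠ ⊤ := by
    intro x; rw [hg]; exact ENNReal.ofReal_ne_top
  calc
    ∫⁻ x, ∫⁻ t, ENNReal.ofReal (‖x - t‖ ^ (-s)) ∂μstar ∂μstar
        = ∫⁻ x, ∫⁻ t, ENNReal.ofReal (‖T x - T t‖ ^ (-s)) ∂ν ∂ν := by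
          rw [hmap, lintegral_map_equiv]
          refine lintegral_congr fun x => ?_
          exact lintegral_map_equiv _ e
    _ = ∫⁻ x, g x * ∫⁻ t, g t * ENNReal.ofReal (‖T x - T t‖ ^ (-s)) ∂μ ∂μ := by
          rw [hν, lintegral_withDensity_eq_lintegral_mul_non_measurable μ hgm hgfin]
          refine lintegral_congr fun x => ?_
          simp only [Pi.mul_apply]
          rw [lintegral_withDensity_eq_lintegral_mul_non_measurable μ hgm hgfin]
          rfl
    _ = ∫⁻ x, ∫⁻ t, ENNReal.ofReal (‖x - t‖ ^ (-s)) ∂μ ∂μ := by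
          refine lintegral_congr_ae (hae.mono fun x hx => ?_)
          dsimp only
          rw [← lintegral_const_mul' _ _ (hgtop x)]
          exact lintegral_congr_ae (hae.mono fun t ht => hkey x t hx ht)
end

section
/- Let $d \geq 2$, $d-2 < s < d$, $\alpha = d-s$, $R > 0$, and $y_{d+1} > 0$. Then for all $x \in \mathbb{R}^d$ with $|x| < R$, the following inequality holds: $\frac{(R^2-|x|^2)^{\alpha/2-1}}{(|x|^2+y_{d+1}^2)^{d-s/2}} \geq \frac{\sin(\alpha\pi/2)}{\pi} \int_0^{\infty} \frac{v^{\alpha/2-1}\,dv}{(v+R^2+y_{d+1}^2)^{d-s/2}(v+R^2-|x|^2)}$. -/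
open MeasureTheory Set Real

lemma beta_int (t : ℝ) (h0 : 0 < t) (h1 : t < 1) :
    IntegrableOn (fun x : ℝ => x ^ (t - 1) * (1 - x) ^ (-t)) (Ioo (0:ℝ) 1) ∧
    ∫ x in Ioo (0:ℝ) 1, x ^ (t - 1) * (1 - x) ^ (-t) = π / Real.sin (π * t) := by
  have hcong : ∀ x ∈ Ioc (0:ℝ) 1,
      ((x:ℂ) ^ ((t:ℂ) - 1) * (1 - (x:ℂ)) ^ (((1 - t : ℝ):ℂ) - 1))
        = ((x ^ (t - 1) * (1 - x) ^ (-t) : ℝ) : ℂ) := by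
    intro x hx
    have hx0 : (0:ℝ) ≤ x := hx.1.le
    have hx1 : (0:ℝ) ≤ 1 - x := by linarith [hx.2]
    rw [Complex.ofReal_mul, Complex.ofReal_cpow hx0, Complex.ofReal_cpow hx1]
    push_cast
    ring_nf
  have hconv := Complex.betaIntegral_convergent (u := (t:ℂ)) (v := ((1 - t : ℝ):ℂ))
    (by simpa using h0) (by simpa [sub_pos] using h1)
  have hIoc : IntegrableOn (fun x : ℝ =>
      (x:ℂ) ^ ((t:ℂ) - 1) * (1 - (x:ℂ)) ^ (((1 - t : ℝ):ℂ) - 1)) (Ioc (0:ℝ) 1) := by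
    simpa [intervalIntegrable_iff, uIoc_of_le (zero_le_one (α := ℝ))] using hconv
  have hIoc' : IntegrableOn (fun x : ℝ =>
      ((x ^ (t - 1) * (1 - x) ^ (-t) : ℝ) : ℂ)) (Ioc (0:ℝ) 1) :=
    hIoc.congr_fun hcong measurableSet_Ioc
  have hInt : IntegrableOn (fun x : ℝ => x ^ (t - 1) * (1 - x) ^ (-t)) (Ioc (0:ℝ) 1) := by
    have := hIoc'.re
    simpa [IntegrableOn] using this
  constructor
  · exact hInt.mono_set Ioo_subset_Ioc_self
  · have hbeta : Complex.betaIntegral (t:ℂ) ((1 - t : ℝ):ℂ)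
        = ((∫ x in Ioc (0:ℝ) 1, x ^ (t - 1) * (1 - x) ^ (-t) : ℝ) : ℂ) := by
      rw [Complex.betaIntegral, intervalIntegral.integral_of_le (zero_le_one (α := ℝ))]
      rw [setIntegral_congr_fun measurableSet_Ioc hcong]
      exact integral_ofReal
    have hGamma : Complex.Gamma (t:ℂ) * Complex.Gamma ((1 - t : ℝ):ℂ)
        = Complex.Gamma ((t:ℂ) + ((1 - t : ℝ):ℂ)) * Complex.betaIntegral (t:ℂ) ((1 - t : ℝ):ℂ) :=
      Complex.Gamma_mul_Gamma_eq_betaIntegral (by simpa using h0) (by simpa [sub_pos] using h1)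
    have hsum : (t:ℂ) + ((1 - t : ℝ):ℂ) = 1 := by push_cast; ring
    rw [hsum, Complex.Gamma_one, one_mul, hbeta] at hGamma
    have hrefl : Real.Gamma t * Real.Gamma (1 - t) = π / Real.sin (π * t) :=
      Real.Gamma_mul_Gamma_one_sub t
    have : ((Real.Gamma t * Real.Gamma (1 - t) : ℝ) : ℂ)
        = ((∫ x in Ioc (0:ℝ) 1, x ^ (t - 1) * (1 - x) ^ (-t) : ℝ) : ℂ) := by
      rw [← hGamma]; push_cast [← Complex.Gamma_ofReal]; norm_num
    rw [← integral_Ioc_eq_integral_Ioo, ← Complex.ofReal_inj.mp this, hrefl]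

lemma key_int (t b : ℝ) (h0 : 0 < t) (h1 : t < 1) (hb : 0 < b) :
    IntegrableOn (fun v : ℝ => v ^ (t - 1) / (v + b)) (Ioi (0:ℝ)) ∧
    ∫ v in Ioi (0:ℝ), v ^ (t - 1) / (v + b) = b ^ (t - 1) * (π / Real.sin (π * t)) := by
  set f : ℝ → ℝ := fun x => b * x / (1 - x) with hf
  set f' : ℝ → ℝ := fun x => b / (1 - x) ^ 2 with hf'
  have hderiv : ∀ x ∈ Ioo (0:ℝ) 1, HasDerivWithinAt f (f' x) (Ioo (0:ℝ) 1) x := by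
    intro x hx
    have h1x : (1 : ℝ) - x ≠ 0 := by have := hx.2; intro h; linarith [sub_eq_zero.mp h]
    have hd : HasDerivAt f (f' x) x := by
      have h := (((hasDerivAt_id x).const_mul b).div ((hasDerivAt_id x).const_sub 1) h1x)
      refine (h.congr_deriv ?_ : HasDerivAt f (f' x) x)
      simp only [hf', id]
      ring
    exact hd.hasDerivWithinAt
  have hinj : InjOn f (Ioo (0:ℝ) 1) := by
    intro x hx y hy h
    have h1x : (1 : ℝ) - x ≠ 0 := by have := hx.2; intro hh; linarith [sub_eq_zero.mp hh]
    have h1y : (1 : ℝ) - y ≠ 0 := by have := hy.2; intro hh; linarith [sub_eq_zero.mp hh]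
    rw [hf] at h; dsimp at h
    rw [div_eq_div_iff h1x h1y] at h
    nlinarith [hb]
  have him : f '' Ioo (0:ℝ) 1 = Ioi (0:ℝ) := by
    ext w
    constructor
    · rintro ⟨x, hx, rfl⟩
      have : 0 < 1 - x := by linarith [hx.2]
      exact div_pos (mul_pos hb hx.1) this
    · intro hw
      have hw' : (0:ℝ) < w := hw
      refine ⟨w / (w + b), ⟨div_pos hw' (by linarith), (div_lt_one (by linarith)).mpr (by linarith)⟩, ?_⟩
      rw [hf]; dsimp
      have hwb : (0:ℝ) < w + b := by linarith
      have h2 : 1 - w / (w + b) = b / (w + b) := by field_simp; ring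
      rw [h2, mul_div_assoc', div_div_div_eq]
      rw [div_eq_iff (by positivity)]
      ring
  have hcalc : ∀ x ∈ Ioo (0:ℝ) 1,
      |f' x| • ((f x) ^ (t - 1) / (f x + b)) = b ^ (t - 1) * (x ^ (t - 1) * (1 - x) ^ (-t)) := by
    intro x hx
    have hux : (0:ℝ) < 1 - x := by linarith [hx.2]
    have hx0 : (0:ℝ) < x := hx.1
    have hfx : f x + b = b / (1 - x) := by rw [hf]; dsimp; field_simp; ring
    have hpow : (f x) ^ (t - 1) = b ^ (t - 1) * x ^ (t - 1) / (1 - x) ^ (t - 1) := by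
      rw [hf]; dsimp
      rw [Real.div_rpow (by positivity) hux.le, Real.mul_rpow hb.le hx0.le]
    have habs : |f' x| = b / (1 - x) ^ 2 := by
      rw [hf']; dsimp; rw [abs_of_pos (by positivity)]
    rw [habs, hfx, hpow, smul_eq_mul]
    rw [Real.rpow_sub hux, Real.rpow_one, Real.rpow_neg hux.le]
    have h1 : (1 - x) ^ t ≠ 0 := by positivity
    field_simp
  obtain ⟨hbint, hbval⟩ := beta_int t h0 h1
  have hmeas : MeasurableSet (Ioo (0:ℝ) 1) := measurableSet_Ioo
  constructor
  · rw [← him]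
    rw [integrableOn_image_iff_integrableOn_abs_deriv_smul hmeas hderiv hinj]
    exact IntegrableOn.congr_fun (hbint.const_mul (b ^ (t-1)))
      (fun x hx => (hcalc x hx).symm) hmeas
  · rw [← him, integral_image_eq_integral_abs_deriv_smul hmeas hderiv hinj]
    rw [setIntegral_congr_fun hmeas hcalc, integral_const_mul, hbval]

theorem stmt7 (d : ℕ) (hd : 2 ≤ d) (s : ℝ) (hs : (d : ℝ) - 2 < s) (hsd : s < (d : ℝ))
    (α : ℝ) (hα : α = (d : ℝ) - s) (R : ℝ) (hR : 0 < R) (c : ℝ) (hc : 0 < c)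
    (x : EuclideanSpace ℝ (Fin d)) (hx : ‖x‖ < R) :
    Real.sin (α * Real.pi / 2) / Real.pi *
        ∫ v in Set.Ioi (0 : ℝ),
          v ^ (α / 2 - 1) /
            ((v + R ^ 2 + c ^ 2) ^ ((d : ℝ) - s / 2) * (v + R ^ 2 - ‖x‖ ^ 2)) ≤
      (R ^ 2 - ‖x‖ ^ 2) ^ (α / 2 - 1) / (‖x‖ ^ 2 + c ^ 2) ^ ((d : ℝ) - s / 2) := by
  have hd2 : (2:ℝ) ≤ (d:ℝ) := by exact_mod_cast hd
  set t : ℝ := α / 2 with ht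
  set p : ℝ := (d : ℝ) - s / 2 with hp
  set a : ℝ := ‖x‖ ^ 2 + c ^ 2 with ha
  set b : ℝ := R ^ 2 - ‖x‖ ^ 2 with hbdef
  have hx0 : (0:ℝ) ≤ ‖x‖ := norm_nonneg x
  have hxR : ‖x‖ ^ 2 < R ^ 2 := by nlinarith
  have hb : 0 < b := by rw [hbdef]; linarith
  have ha0 : 0 < a := by positivity
  have ht0 : 0 < t := by rw [ht, hα]; linarith
  have ht1 : t < 1 := by rw [ht, hα]; linarith
  have hp0 : 0 < p := by rw [hp]; linarith
  have hsin : 0 < Real.sin (π * t) :=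
    Real.sin_pos_of_pos_of_lt_pi (by positivity) (by nlinarith [Real.pi_pos])
  have hsin' : Real.sin (α * Real.pi / 2) = Real.sin (π * t) := by
    rw [ht]; ring_nf
  obtain ⟨hki, hkv⟩ := key_int t b ht0 ht1 hb
  have hgi : Integrable (fun v : ℝ => (a ^ p)⁻¹ * (v ^ (t - 1) / (v + b)))
      (volume.restrict (Ioi (0:ℝ))) := hki.const_mul _
  have hmono : (∫ v in Ioi (0:ℝ),
        v ^ (α / 2 - 1) / ((v + R ^ 2 + c ^ 2) ^ ((d : ℝ) - s / 2) * (v + R ^ 2 - ‖x‖ ^ 2)))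
      ≤ ∫ v in Ioi (0:ℝ), (a ^ p)⁻¹ * (v ^ (t - 1) / (v + b)) := by
    refine integral_mono_of_nonneg ?_ hgi ?_
    · filter_upwards [ae_restrict_mem measurableSet_Ioi] with v hv
      have hv0 : (0:ℝ) < v := hv
      have h1 : (0:ℝ) < (v + R ^ 2 + c ^ 2) ^ ((d : ℝ) - s / 2) :=
        Real.rpow_pos_of_pos (by positivity) _
      have h2 : (0:ℝ) < v + R ^ 2 - ‖x‖ ^ 2 := by linarith
      exact div_nonneg (Real.rpow_pos_of_pos hv0 _).le (by positivity)
    · filter_upwards [ae_restrict_mem measurableSet_Ioi] with v hv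
      have hv0 : (0:ℝ) < v := hv
      have h2 : (0:ℝ) < v + b := by linarith
      have hA : a ≤ v + R ^ 2 + c ^ 2 := by rw [ha]; nlinarith
      have hpow : a ^ p ≤ (v + R ^ 2 + c ^ 2) ^ p :=
        Real.rpow_le_rpow ha0.le hA hp0.le
      have heq : v + R ^ 2 - ‖x‖ ^ 2 = v + b := by rw [hbdef]; ring
      have hrw : (a ^ p)⁻¹ * (v ^ (t - 1) / (v + b)) = v ^ (t - 1) / (a ^ p * (v + b)) := by
        rw [mul_div_assoc', inv_mul_eq_div, div_div]
      rw [heq, ht, hrw]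
      apply div_le_div_of_nonneg_left (Real.rpow_pos_of_pos hv0 _).le
        (by positivity) (mul_le_mul_of_nonneg_right hpow h2.le)
  have hval : (∫ v in Ioi (0:ℝ), (a ^ p)⁻¹ * (v ^ (t - 1) / (v + b)))
      = (a ^ p)⁻¹ * (b ^ (t - 1) * (π / Real.sin (π * t))) := by
    rw [integral_const_mul, hkv]
  have hfin : Real.sin (π * t) / π * ((a ^ p)⁻¹ * (b ^ (t - 1) * (π / Real.sin (π * t))))
      = b ^ (t - 1) / a ^ p := by
    field_simp
  have hsdp : (0:ℝ) ≤ Real.sin (π * t) / π := by positivity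
  calc Real.sin (α * Real.pi / 2) / Real.pi *
        ∫ v in Set.Ioi (0 : ℝ), v ^ (α / 2 - 1) /
          ((v + R ^ 2 + c ^ 2) ^ ((d : ℝ) - s / 2) * (v + R ^ 2 - ‖x‖ ^ 2))
      ≤ Real.sin (π * t) / π * ∫ v in Ioi (0:ℝ), (a ^ p)⁻¹ * (v ^ (t - 1) / (v + b)) := by
        rw [hsin']; exact mul_le_mul_of_nonneg_left hmono hsdp
    _ = b ^ (t - 1) / a ^ p := by rw [hval, hfin]
    _ = (R ^ 2 - ‖x‖ ^ 2) ^ (α / 2 - 1) / (‖x‖ ^ 2 + c ^ 2) ^ ((d : ℝ) - s / 2) := by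
        rw [hbdef, ha, ht, hp]
end

section
/- Let $d \geq 2$, $0 < s < d$, $\alpha = d - s$, and define $G(z) = z^{s/2}\left({}_2F_1\left(\frac{s}{2},\frac{d}{2},1+\frac{s}{2},-z\right) - (1+z)^{-d/2}\right)$ for $z \geq 0$. Then $G$ admits the integral representation $G(z) = \frac{\Gamma(1+s/2)}{\Gamma(d/2)\Gamma(1-\alpha/2)} \int_0^1 x^{d/2}(1-x)^{-\alpha/2}(x+1/z)^{-s/2-1}\,dx$ for $z > 0$, and $G$ is non-decreasing on $[0,\infty)$ with $\lim_{z\to 0^+} G(z) = 0$ and $\lim_{z\to\infty} G(z) = \frac{\Gamma(\alpha/2)\Gamma(1+s/2)}{\Gamma(d/2)}$. -/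
open Real Filter MeasureTheory Set


lemma eq_of_log_eq {A B : ℝ} (hA : 0 < A) (hB : 0 < B) (h : Real.log A = Real.log B) : A = B := by
  rw [← Real.exp_log hA, ← Real.exp_log hB, h]

lemma contOn_aux {u v : ℝ} {s : Set ℝ} (h : ∀ x ∈ s, 0 < x ∧ x < 1) :
    ContinuousOn (fun x : ℝ => x ^ u * (1 - x) ^ v) s := by
  refine ContinuousOn.mul ?_ ?_
  · exact continuousOn_id.rpow_const fun x hx => Or.inl (h x hx).1.ne'
  · exact (continuousOn_const.sub continuousOn_id).rpow_const
      fun x hx => Or.inl (by have := (h x hx).2; show (1:ℝ) - x ≠ 0; intro hc; nlinarith)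

lemma integrableOn_rpow_mul_rpow {u v : ℝ} (hu : -1 < u) (hv : -1 < v) :
    IntegrableOn (fun x : ℝ => x ^ u * (1 - x) ^ v) (Set.Ioo 0 1) := by
  have hsub : Set.Ioo (0:ℝ) 1 ⊆ Set.Ioc 0 2⁻¹ ∪ Set.Ioo 2⁻¹ 1 := by
    intro x hx
    rcases le_or_gt x 2⁻¹ with h | h
    · exact Or.inl ⟨hx.1, h⟩
    · exact Or.inr ⟨h, hx.2⟩
  refine IntegrableOn.mono_set (IntegrableOn.union ?_ ?_) hsub
  · -- on Ioc 0 2⁻¹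
    have hbase : IntegrableOn (fun x : ℝ => x ^ u) (Set.Ioc 0 2⁻¹) := by
      have := intervalIntegral.intervalIntegrable_rpow' (a := 0) (b := 2⁻¹) hu
      rwa [intervalIntegrable_iff_integrableOn_Ioc_of_le (by norm_num)] at this
    refine Integrable.mono' (hbase.const_mul (max 1 ((2:ℝ)⁻¹ ^ v))) ?_ ?_
    · exact (contOn_aux (fun x hx => ⟨hx.1, lt_of_le_of_lt hx.2 (by norm_num)⟩)).aestronglyMeasurable
        measurableSet_Ioc
    · rw [ae_restrict_iff' measurableSet_Ioc]
      refine Filter.Eventually.of_forall fun x hx => ?_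
      have hx0 : (0:ℝ) < x := hx.1
      have hx1 : x ≤ 2⁻¹ := hx.2
      have h1x : (2:ℝ)⁻¹ ≤ 1 - x := by linarith
      have h1x0 : (0:ℝ) < 1 - x := by linarith
      rw [Real.norm_eq_abs, abs_of_nonneg (by positivity)]
      rw [mul_comm (max 1 ((2:ℝ)⁻¹ ^ v)) (x ^ u)]
      refine mul_le_mul_of_nonneg_left ?_ (by positivity)
      rcases le_or_gt 0 v with hv0 | hv0
      · calc (1-x) ^ v ≤ 1 ^ v := Real.rpow_le_rpow h1x0.le (by linarith) hv0
          _ = 1 := Real.one_rpow v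
          _ ≤ _ := le_max_left _ _
      · calc (1-x) ^ v ≤ (2:ℝ)⁻¹ ^ v := Real.rpow_le_rpow_of_nonpos (by norm_num) h1x hv0.le
          _ ≤ _ := le_max_right _ _
  · -- on Ioo 2⁻¹ 1
    have hbase : IntegrableOn (fun x : ℝ => (1 - x) ^ v) (Set.Ioo 2⁻¹ 1) := by
      have h1 := intervalIntegral.intervalIntegrable_rpow' (a := 0) (b := 2⁻¹) hv
      have h2 : IntervalIntegrable (fun x : ℝ => (1 - x) ^ v) volume (1 - 2⁻¹) (1 - 0) :=
        (h1.comp_sub_left 1).symm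
      rw [show (1:ℝ) - 2⁻¹ = 2⁻¹ by norm_num, sub_zero,
        intervalIntegrable_iff_integrableOn_Ioc_of_le (by norm_num)] at h2
      exact h2.mono_set Set.Ioo_subset_Ioc_self
    refine Integrable.mono' (hbase.const_mul (max 1 ((2:ℝ)⁻¹ ^ u))) ?_ ?_
    · exact (contOn_aux (fun x hx => ⟨lt_trans (by norm_num) hx.1, hx.2⟩)).aestronglyMeasurable
        measurableSet_Ioo
    · rw [ae_restrict_iff' measurableSet_Ioo]
      refine Filter.Eventually.of_forall fun x hx => ?_
      have hx0 : (2:ℝ)⁻¹ < x := hx.1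
      have hx1 : x < 1 := hx.2
      have h1x0 : (0:ℝ) < 1 - x := by linarith
      rw [Real.norm_eq_abs, abs_of_nonneg (by positivity)]
      rw [mul_comm (max 1 ((2:ℝ)⁻¹ ^ u)), mul_comm (x ^ u)]
      refine mul_le_mul_of_nonneg_left ?_ (by positivity)
      rcases le_or_gt 0 u with hu0 | hu0
      · calc x ^ u ≤ 1 ^ u := Real.rpow_le_rpow (by linarith) hx1.le hu0
          _ = 1 := Real.one_rpow u
          _ ≤ _ := le_max_left _ _
      · calc x ^ u ≤ (2:ℝ)⁻¹ ^ u := Real.rpow_le_rpow_of_nonpos (by norm_num) hx0.le hu0.le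
          _ ≤ _ := le_max_right _ _

lemma integrableOn_rpow_mul_rpow_mul {u v : ℝ} (hu : -1 < u) (hv : -1 < v)
    {k : ℝ → ℝ} (hk : ContinuousOn k (Set.Icc 0 1)) :
    IntegrableOn (fun x : ℝ => x ^ u * (1 - x) ^ v * k x) (Set.Ioo 0 1) := by
  obtain ⟨M, hM⟩ := (isCompact_Icc (a := (0:ℝ)) (b := 1)).exists_bound_of_continuousOn hk
  refine Integrable.mono' ((integrableOn_rpow_mul_rpow hu hv).const_mul (max M 0)) ?_ ?_
  · exact ((contOn_aux fun x hx => ⟨hx.1, hx.2⟩).mul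
      (hk.mono Set.Ioo_subset_Icc_self)).aestronglyMeasurable measurableSet_Ioo
  · rw [ae_restrict_iff' measurableSet_Ioo]
    refine Filter.Eventually.of_forall fun x hx => ?_
    have hx0 : (0:ℝ) < x := hx.1
    have hx1 : x < 1 := hx.2
    have h1x0 : (0:ℝ) < 1 - x := by linarith
    rw [Real.norm_eq_abs, abs_mul, abs_of_nonneg (by positivity), mul_comm (max M 0)]
    refine mul_le_mul_of_nonneg_left ?_ (by positivity)
    exact le_trans (hM x ⟨hx0.le, hx1.le⟩) (le_max_left _ _)



lemma beta_real {u v : ℝ} (hu : 0 < u) (hv : 0 < v) :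
    ∫ x in Set.Ioo (0:ℝ) 1, x ^ (u-1) * (1-x) ^ (v-1)
      = Real.Gamma u * Real.Gamma v / Real.Gamma (u+v) := by
  have hbeta : Complex.betaIntegral u v
      = ((∫ x in (0:ℝ)..1, x ^ (u-1) * (1-x) ^ (v-1) : ℝ) : ℂ) := by
    rw [Complex.betaIntegral, ← intervalIntegral.integral_ofReal]
    refine intervalIntegral.integral_congr fun x hx => ?_
    rw [Set.uIcc_of_le zero_le_one] at hx
    push_cast
    rw [Complex.ofReal_cpow hx.1, Complex.ofReal_cpow (by linarith [hx.2])]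
    push_cast
    ring
  have h := Complex.Gamma_mul_Gamma_eq_betaIntegral
    (s := (u:ℂ)) (t := (v:ℂ)) (by simpa using hu) (by simpa using hv)
  rw [hbeta, Complex.Gamma_ofReal, Complex.Gamma_ofReal,
    show ((u:ℂ) + v) = ((u + v : ℝ) : ℂ) by push_cast; ring, Complex.Gamma_ofReal] at h
  have h' : Real.Gamma u * Real.Gamma v
      = Real.Gamma (u+v) * ∫ x in (0:ℝ)..1, x ^ (u-1) * (1-x) ^ (v-1) := by exact_mod_cast h
  have hΓ : Real.Gamma (u+v) ≠ 0 := (Real.Gamma_pos_of_pos (by linarith)).ne'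
  rw [intervalIntegral.integral_of_le zero_le_one, integral_Ioc_eq_integral_Ioo] at h'
  rw [eq_div_iff hΓ]
  linarith [h']

lemma eq_of_log_eq' {A B : ℝ} (hA : 0 < A) (hB : 0 < B) (h : Real.log A = Real.log B) : A = B := by
  rw [← Real.exp_log hA, ← Real.exp_log hB, h]

lemma alg_cov (w u D m b c : ℝ) (hw : 0 < w) (hu : 0 < u) (hD : 0 < D) (hm : 0 < m)
    (h1w : 0 < 1 + w) :
    (w*(1+w)/(D*D)) * ((w*u/D) ^ (b-1) * ((1+w)*m/D) ^ (c-b-1) * (w*(1+w)/D) ^ (-c))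
      = (w ^ (b-c) * (1+w) ^ (-b)) * (u ^ (b-1) * m ^ (c-b-1)) := by
  refine eq_of_log_eq' (by positivity) (by positivity) ?_
  simp (disch := positivity) only [Real.log_mul, Real.log_div, Real.log_rpow]
  ring

lemma key_cov {b c w : ℝ} (hb : 0 < b) (hbc : b < c) (hw : 0 < w) :
    ∫ x in Set.Ioo (0:ℝ) 1, x ^ (b-1) * (1-x) ^ (c-b-1) * (x+w) ^ (-c)
      = (Real.Gamma b * Real.Gamma (c-b) / Real.Gamma c) * (w ^ (b-c) * (1+w) ^ (-b)) := by
  have h1w : (0:ℝ) < 1 + w := by linarith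
  set φ : ℝ → ℝ := fun u => w * u / (1 + w - u) with hφ
  have himg : φ '' Set.Ioo 0 1 = Set.Ioo 0 1 := by
    ext x
    constructor
    · rintro ⟨t, ⟨ht0, ht1⟩, rfl⟩
      have hD : 0 < 1 + w - t := by linarith
      refine ⟨div_pos (mul_pos hw ht0) hD, ?_⟩
      rw [div_lt_one hD]
      nlinarith
    · rintro ⟨hx0, hx1⟩
      have hxw : (0:ℝ) < x + w := by linarith
      refine ⟨(1+w)*x/(x+w), ⟨div_pos (mul_pos h1w hx0) hxw, ?_⟩, ?_⟩
      · rw [div_lt_one hxw]; nlinarith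
      · have hden : 1 + w - (1+w)*x/(x+w) = (1+w)*w/(x+w) := by field_simp; ring
        simp only [hφ, hden]
        rw [div_eq_iff (by positivity : ((1+w)*w/(x+w)) ≠ 0)]
        field_simp
  have hder : ∀ t ∈ Set.Ioo (0:ℝ) 1,
      HasDerivWithinAt φ (w*(1+w)/((1+w-t)*(1+w-t))) (Set.Ioo 0 1) t := by
    intro t ht
    have hD : 0 < 1 + w - t := by linarith [ht.2]
    have h1 : HasDerivAt (fun y : ℝ => w * y) w t := by
      simpa using (hasDerivAt_id t).const_mul w
    have h2 : HasDerivAt (fun y : ℝ => 1 + w - y) (-1) t := by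
      simpa using ((hasDerivAt_id t).const_sub (1+w))
    have h3 := h1.div h2 hD.ne'
    have heq : (w * (1+w-t) - w*t*(-1)) / (1+w-t)^2 = w*(1+w)/((1+w-t)*(1+w-t)) := by
      rw [sq]; ring_nf
    rw [heq] at h3
    exact h3.hasDerivWithinAt
  have hinj : Set.InjOn φ (Set.Ioo 0 1) := by
    intro t1 h1 t2 h2 heq
    have hD1 : 0 < 1 + w - t1 := by linarith [h1.2]
    have hD2 : 0 < 1 + w - t2 := by linarith [h2.2]
    simp only [hφ] at heq
    rw [div_eq_div_iff hD1.ne' hD2.ne'] at heq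
    have h3 : (t1 - t2) * (w*(1+w)) = 0 := by linear_combination heq
    rcases mul_eq_zero.1 h3 with h | h
    · linarith
    · nlinarith
  have hcov := MeasureTheory.integral_image_eq_integral_abs_deriv_smul measurableSet_Ioo hder hinj
    (fun x => x ^ (b-1) * (1-x) ^ (c-b-1) * (x+w) ^ (-c))
  rw [himg] at hcov
  rw [hcov]
  have hptwise : ∀ t ∈ Set.Ioo (0:ℝ) 1,
      |w*(1+w)/((1+w-t)*(1+w-t))| • ((φ t) ^ (b-1) * (1 - φ t) ^ (c-b-1) * (φ t + w) ^ (-c))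
        = (w ^ (b-c) * (1+w) ^ (-b)) * (t ^ (b-1) * (1-t) ^ (c-b-1)) := by
    intro t ht
    obtain ⟨ht0, ht1⟩ := ht
    have hD : 0 < 1 + w - t := by linarith
    have hm : 0 < 1 - t := by linarith
    have e1 : 1 - φ t = (1+w)*(1-t)/(1+w-t) := by
      simp only [hφ]; field_simp; ring
    have e2 : φ t + w = w*(1+w)/(1+w-t) := by
      simp only [hφ]; field_simp; ring
    rw [smul_eq_mul, abs_of_pos (by positivity), e1, e2]
    simp only [hφ]
    exact alg_cov w t (1+w-t) (1-t) b c hw ht0 hD hm h1w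
  rw [MeasureTheory.setIntegral_congr_fun measurableSet_Ioo hptwise]
  rw [MeasureTheory.integral_const_mul]
  have hbeta' : ∫ t in Set.Ioo (0:ℝ) 1, t ^ (b-1) * (1-t) ^ (c-b-1)
      = Real.Gamma b * Real.Gamma (c-b) / Real.Gamma c := by
    have := beta_real hb (by linarith : (0:ℝ) < c - b)
    rw [show b + (c-b) = c by ring] at this
    rw [show (c-b-1 : ℝ) = (c-b) - 1 by ring]
    exact this
  rw [hbeta']
  ring



lemma contOn_k {w r : ℝ} (hw : 0 < w) :
    ContinuousOn (fun x : ℝ => (x + w) ^ r) (Set.Icc 0 1) := by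
  refine ContinuousOn.rpow_const (continuousOn_id.add continuousOn_const) fun x hx => Or.inl ?_
  have hx0 : 0 ≤ x := hx.1
  positivity

lemma rep_aux {b p z : ℝ} (hb : 1 ≤ b) (hp : 0 < p) (hbp : b < 1 + p) (hz : 0 < z) :
    z ^ p * ((Real.Gamma (1+p) / (Real.Gamma b * Real.Gamma (1+p-b))) *
        (∫ x in Set.Ioo (0:ℝ) 1, x ^ (b-1) * (1-x) ^ (1+p-b-1) * (1+z*x) ^ (-p))
      - (1+z) ^ (-b))
    = (Real.Gamma (1+p) / (Real.Gamma b * Real.Gamma (1+p-b))) *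
        ∫ x in Set.Ioo (0:ℝ) 1, x ^ b * (1-x) ^ (1+p-b-1) * (x+1/z) ^ (-p-1) := by
  have hb0 : (0:ℝ) < b := by linarith
  have hw : (0:ℝ) < 1/z := by positivity
  have hq : (0:ℝ) < 1+p-b := by linarith
  set w : ℝ := 1/z with hwdef
  set E : ℝ := Real.Gamma (1+p) / (Real.Gamma b * Real.Gamma (1+p-b)) with hEdef
  have hΓc : 0 < Real.Gamma (1+p) := Real.Gamma_pos_of_pos (by linarith)
  have hΓb : 0 < Real.Gamma b := Real.Gamma_pos_of_pos hb0
  have hΓq : 0 < Real.Gamma (1+p-b) := Real.Gamma_pos_of_pos hq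
  have hint2 : IntegrableOn (fun x : ℝ => x ^ b * (1-x) ^ (1+p-b-1) * (x+w) ^ (-p-1))
      (Set.Ioo 0 1) :=
    integrableOn_rpow_mul_rpow_mul (by linarith) (by linarith) (contOn_k hw)
  have hint3 : IntegrableOn (fun x : ℝ => x ^ (b-1) * (1-x) ^ (1+p-b-1) * (x+w) ^ (-p-1))
      (Set.Ioo 0 1) :=
    integrableOn_rpow_mul_rpow_mul (by linarith) (by linarith) (contOn_k hw)
  -- Step A+B : z^p * I1 = J2 + w * J3
  have h1 : z ^ p * (∫ x in Set.Ioo (0:ℝ) 1, x ^ (b-1) * (1-x) ^ (1+p-b-1) * (1+z*x) ^ (-p))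
      = (∫ x in Set.Ioo (0:ℝ) 1, x ^ b * (1-x) ^ (1+p-b-1) * (x+w) ^ (-p-1))
        + w * ∫ x in Set.Ioo (0:ℝ) 1, x ^ (b-1) * (1-x) ^ (1+p-b-1) * (x+w) ^ (-p-1) := by
    rw [← MeasureTheory.integral_const_mul, ← MeasureTheory.integral_const_mul,
      ← MeasureTheory.integral_add hint2 (hint3.const_mul w)]
    refine MeasureTheory.setIntegral_congr_fun measurableSet_Ioo fun x hx => ?_
    obtain ⟨hx0, hx1⟩ := hx
    have hxw : 0 < x + w := by positivity
    have h1zx : 0 < 1 + z*x := by positivity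
    have e0 : z ^ p * (1+z*x) ^ (-p) = (x+w) ^ (-p) := by
      have exw : x + w = (1+z*x)/z := by rw [hwdef]; field_simp; ring
      rw [exw]
      refine eq_of_log_eq (by positivity) (by positivity) ?_
      simp (disch := positivity) only [Real.log_mul, Real.log_div, Real.log_rpow]
      ring
    have e1 : (x+w) ^ (-p) = (x+w) ^ (-p-1) * (x+w) := by
      rw [← Real.rpow_add_one hxw.ne' (-p-1)]
      congr 1
      ring
    have e2 : x ^ b = x ^ (b-1) * x := by
      rw [← Real.rpow_add_one hx0.ne' (b-1)]
      congr 1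
      ring
    calc z ^ p * (x ^ (b-1) * (1-x) ^ (1+p-b-1) * (1+z*x) ^ (-p))
        = x ^ (b-1) * (1-x) ^ (1+p-b-1) * (z ^ p * (1+z*x) ^ (-p)) := by ring
      _ = x ^ (b-1) * (1-x) ^ (1+p-b-1) * ((x+w) ^ (-p-1) * (x+w)) := by rw [e0, e1]
      _ = _ := by rw [e2]; ring
  -- Step C : the key integral
  have hk := key_cov hb0 (show b < 1+p by linarith) hw
  rw [show (1+p-b-1:ℝ) = 1+p-b-1 by ring, show (-(1+p):ℝ) = -p-1 by ring] at hk
  have hpow : w * (w ^ (b-(1+p)) * (1+w) ^ (-b)) = z ^ p * (1+z) ^ (-b) := by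
    have e : (1:ℝ) + w = (1+z)/z := by rw [hwdef]; field_simp; ring
    rw [hwdef, e, one_div]
    refine eq_of_log_eq (by positivity) (by positivity) ?_
    simp (disch := positivity) only [Real.log_mul, Real.log_div, Real.log_rpow, Real.log_inv]
    ring
  have hcomb : w * (∫ x in Set.Ioo (0:ℝ) 1, x ^ (b-1) * (1-x) ^ (1+p-b-1) * (x+w) ^ (-p-1))
      = (Real.Gamma b * Real.Gamma (1+p-b) / Real.Gamma (1+p)) * (z ^ p * (1+z) ^ (-b)) := by
    rw [hk, ← hpow]
    ring
  have hE1 : E * (Real.Gamma b * Real.Gamma (1+p-b) / Real.Gamma (1+p)) = 1 := by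
    rw [hEdef]
    field_simp
  linear_combination E * h1 + E * hcomb + (z ^ p * (1+z) ^ (-b)) * hE1



/-- Gauss hypergeometric function `₂F₁(a,b;c;z)` via the Euler integral representation. -/
noncomputable def twoF1 (a b c z : ℝ) : ℝ :=
  (Real.Gamma c / (Real.Gamma b * Real.Gamma (c - b))) *
    ∫ x in Set.Ioo (0 : ℝ) 1, x ^ (b - 1) * (1 - x) ^ (c - b - 1) * (1 - z * x) ^ (-a)

theorem stmt9 (d : ℕ) (hd : 2 ≤ d) (s : ℝ) (hs : 0 < s) (hsd : s < (d : ℝ))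
    (hs2 : (d : ℝ) - 2 < s) (α : ℝ) (hα : α = (d : ℝ) - s)
    (G : ℝ → ℝ)
    (hG : ∀ z : ℝ, G z =
      z ^ (s / 2) * (twoF1 (s / 2) ((d : ℝ) / 2) (1 + s / 2) (-z) - (1 + z) ^ (-(d : ℝ) / 2))) :
    (∀ z : ℝ, 0 < z → G z =
        Real.Gamma (1 + s / 2) / (Real.Gamma ((d : ℝ) / 2) * Real.Gamma (1 - α / 2)) *
          ∫ x in Set.Ioo (0 : ℝ) 1,
            x ^ ((d : ℝ) / 2) * (1 - x) ^ (-α / 2) * (x + 1 / z) ^ (-s / 2 - 1)) ∧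
      MonotoneOn G (Set.Ici 0) ∧
      Tendsto G (nhdsWithin 0 (Set.Ioi 0)) (nhds 0) ∧
      Tendsto G atTop
        (nhds (Real.Gamma (α / 2) * Real.Gamma (1 + s / 2) / Real.Gamma ((d : ℝ) / 2))) := by
  have hd2 : (2:ℝ) ≤ (d:ℝ) := by exact_mod_cast hd
  have hb : (1:ℝ) ≤ (d:ℝ)/2 := by linarith
  have hp : 0 < s/2 := by linarith
  have hbp : (d:ℝ)/2 < 1 + s/2 := by linarith
  have hαpos : 0 < α := by rw [hα]; linarith
  have hα2 : α < 2 := by rw [hα]; linarith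
  have hΓc : 0 < Real.Gamma (1 + s/2) := Real.Gamma_pos_of_pos (by linarith)
  have hΓb : 0 < Real.Gamma ((d:ℝ)/2) := Real.Gamma_pos_of_pos (by linarith)
  have hΓq : 0 < Real.Gamma (1 - α/2) := Real.Gamma_pos_of_pos (by linarith)
  set C : ℝ := Real.Gamma (1 + s / 2) / (Real.Gamma ((d : ℝ) / 2) * Real.Gamma (1 - α / 2))
    with hCdef
  have hC : 0 < C := by rw [hCdef]; positivity
  -- integrability of the main integrand
  have hint : ∀ w : ℝ, 0 < w →
      IntegrableOn (fun x : ℝ => x ^ ((d:ℝ)/2) * (1-x) ^ (-α/2) * (x+w) ^ (-s/2-1))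
        (Set.Ioo 0 1) := fun w hw =>
    integrableOn_rpow_mul_rpow_mul (by linarith) (by linarith) (contOn_k hw)
  have hptnn : ∀ w : ℝ, 0 < w → ∀ x ∈ Set.Ioo (0:ℝ) 1,
      0 ≤ x ^ ((d:ℝ)/2) * (1-x) ^ (-α/2) * (x+w) ^ (-s/2-1) := by
    intro w hw x hx
    obtain ⟨hx0, hx1⟩ := hx
    have h1x : (0:ℝ) < 1 - x := by linarith
    positivity
  -- the integral representation
  have hrep : ∀ z : ℝ, 0 < z → G z =
      C * ∫ x in Set.Ioo (0 : ℝ) 1,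
        x ^ ((d : ℝ) / 2) * (1 - x) ^ (-α / 2) * (x + 1 / z) ^ (-s / 2 - 1) := by
    intro z hz
    have h := rep_aux (b := (d:ℝ)/2) (p := s/2) hb hp hbp hz
    rw [hG z, twoF1]
    simp only [neg_mul, sub_neg_eq_add]
    rw [hCdef]
    rw [show (1 - α/2 : ℝ) = 1 + s/2 - (d:ℝ)/2 by rw [hα]; ring]
    rw [show (-α/2 : ℝ) = 1 + s/2 - (d:ℝ)/2 - 1 by rw [hα]; ring]
    rw [show (-s/2 - 1 : ℝ) = -(s/2) - 1 by ring]
    rw [show (-(d:ℝ)/2 : ℝ) = -((d:ℝ)/2) by ring]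
    exact h
  -- G 0 = 0 and nonnegativity
  have hG0 : G 0 = 0 := by
    rw [hG 0, Real.zero_rpow (by positivity : s/2 ≠ 0), zero_mul]
  have hGnn : ∀ z : ℝ, 0 < z → 0 ≤ G z := by
    intro z hz
    rw [hrep z hz]
    exact mul_nonneg hC.le (setIntegral_nonneg measurableSet_Ioo (hptnn (1/z) (by positivity)))
  -- monotonicity
  have hmono2 : ∀ z₁ z₂ : ℝ, 0 < z₁ → z₁ ≤ z₂ → G z₁ ≤ G z₂ := by
    intro z₁ z₂ h1 h12
    have h2 : 0 < z₂ := lt_of_lt_of_le h1 h12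
    rw [hrep z₁ h1, hrep z₂ h2]
    refine mul_le_mul_of_nonneg_left ?_ hC.le
    refine setIntegral_mono_on (hint _ (by positivity)) (hint _ (by positivity))
      measurableSet_Ioo ?_
    intro x hx
    obtain ⟨hx0, hx1⟩ := hx
    have h1x : (0:ℝ) < 1 - x := by linarith
    have hiz : 1/z₂ ≤ 1/z₁ := one_div_le_one_div_of_le h1 h12
    refine mul_le_mul_of_nonneg_left ?_ (by positivity)
    exact Real.rpow_le_rpow_of_nonpos (by positivity) (by linarith) (by linarith)
  have hmono : MonotoneOn G (Set.Ici 0) := by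
    intro a ha x hx hax
    rcases eq_or_lt_of_le (Set.mem_Ici.mp ha) with h | h
    · rcases eq_or_lt_of_le (Set.mem_Ici.mp hx) with h' | h'
      · rw [← h, ← h']
      · rw [← h, hG0]; exact hGnn x h'
    · exact hmono2 a x h hax
  -- limit at 0+
  have hK0nn : 0 ≤ ∫ x in Set.Ioo (0:ℝ) 1, x ^ ((d:ℝ)/2) * (1-x) ^ (-α/2) := by
    refine setIntegral_nonneg measurableSet_Ioo fun x hx => ?_
    obtain ⟨hx0, hx1⟩ := hx
    have h1x : (0:ℝ) < 1 - x := by linarith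
    positivity
  have hub : ∀ z : ℝ, 0 < z → G z ≤
      C * (∫ x in Set.Ioo (0:ℝ) 1, x ^ ((d:ℝ)/2) * (1-x) ^ (-α/2)) * z ^ (s/2+1) := by
    intro z hz
    rw [hrep z hz]
    have step : (∫ x in Set.Ioo (0:ℝ) 1,
          x ^ ((d : ℝ) / 2) * (1 - x) ^ (-α / 2) * (x + 1 / z) ^ (-s / 2 - 1))
        ≤ ∫ x in Set.Ioo (0:ℝ) 1, z ^ (s/2+1) * (x ^ ((d:ℝ)/2) * (1-x) ^ (-α/2)) := by
      refine setIntegral_mono_on (hint _ (by positivity))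
        ((integrableOn_rpow_mul_rpow (u := (d:ℝ)/2) (v := -α/2) (by linarith)
          (by linarith)).const_mul _) measurableSet_Ioo ?_
      intro x hx
      obtain ⟨hx0, hx1⟩ := hx
      have h1x : (0:ℝ) < 1 - x := by linarith
      have e : (1/z : ℝ) ^ (-s/2-1) = z ^ (s/2+1) := by
        rw [one_div, Real.inv_rpow hz.le, ← Real.rpow_neg hz.le]
        congr 1
        ring
      have key : (x+1/z) ^ (-s/2-1) ≤ z ^ (s/2+1) := by
        calc (x+1/z) ^ (-s/2-1) ≤ (1/z) ^ (-s/2-1) :=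
              Real.rpow_le_rpow_of_nonpos (by positivity) (by linarith) (by linarith)
          _ = z ^ (s/2+1) := e
      calc x ^ ((d:ℝ)/2) * (1-x) ^ (-α/2) * (x+1/z) ^ (-s/2-1)
          ≤ x ^ ((d:ℝ)/2) * (1-x) ^ (-α/2) * (z ^ (s/2+1)) :=
            mul_le_mul_of_nonneg_left key (by positivity)
        _ = z ^ (s/2+1) * (x ^ ((d:ℝ)/2) * (1-x) ^ (-α/2)) := by ring
    rw [integral_const_mul] at step
    calc C * (∫ x in Set.Ioo (0:ℝ) 1,
          x ^ ((d : ℝ) / 2) * (1 - x) ^ (-α / 2) * (x + 1 / z) ^ (-s / 2 - 1))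
        ≤ C * (z ^ (s/2+1) * ∫ x in Set.Ioo (0:ℝ) 1, x ^ ((d:ℝ)/2) * (1-x) ^ (-α/2)) :=
          mul_le_mul_of_nonneg_left step hC.le
      _ = C * (∫ x in Set.Ioo (0:ℝ) 1, x ^ ((d:ℝ)/2) * (1-x) ^ (-α/2)) * z ^ (s/2+1) := by
          ring
  have hlim0 : Tendsto G (nhdsWithin 0 (Set.Ioi 0)) (nhds 0) := by
    have h0 : Tendsto (fun z : ℝ => z ^ (s/2+1)) (nhds 0) (nhds 0) := by
      have := (Real.continuousAt_rpow_const 0 (s/2+1) (Or.inr (by linarith))).tendsto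
      rwa [Real.zero_rpow (by positivity : s/2+1 ≠ 0)] at this
    have h1 : Tendsto (fun z : ℝ =>
        C * (∫ x in Set.Ioo (0:ℝ) 1, x ^ ((d:ℝ)/2) * (1-x) ^ (-α/2)) * z ^ (s/2+1))
        (nhdsWithin 0 (Set.Ioi 0)) (nhds 0) := by
      have h2 : Tendsto (fun z : ℝ =>
          (C * ∫ x in Set.Ioo (0:ℝ) 1, x ^ ((d:ℝ)/2) * (1-x) ^ (-α/2)) * z ^ (s/2+1))
          (nhdsWithin 0 (Set.Ioi 0))
          (nhds ((C * ∫ x in Set.Ioo (0:ℝ) 1, x ^ ((d:ℝ)/2) * (1-x) ^ (-α/2)) * 0)) :=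
        (h0.const_mul _).mono_left nhdsWithin_le_nhds
      simpa [mul_assoc] using h2
    refine tendsto_of_tendsto_of_tendsto_of_le_of_le' tendsto_const_nhds h1 ?_ ?_
    · filter_upwards [self_mem_nhdsWithin] with z hz using hGnn z hz
    · filter_upwards [self_mem_nhdsWithin] with z hz using hub z hz
  -- limit at infinity
  have hbeta2 : ∫ x in Set.Ioo (0:ℝ) 1, x ^ (α/2-1) * (1-x) ^ (-α/2)
      = Real.Gamma (α/2) * Real.Gamma (1-α/2) := by
    have h := beta_real (u := α/2) (v := 1-α/2) (by linarith) (by linarith)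
    rw [show (α/2 + (1-α/2) : ℝ) = 1 by ring, Real.Gamma_one, div_one] at h
    rw [show (1-α/2-1 : ℝ) = -α/2 by ring] at h
    exact h
  have hDCT : Tendsto (fun z : ℝ => ∫ x in Set.Ioo (0:ℝ) 1,
      x ^ ((d : ℝ) / 2) * (1 - x) ^ (-α / 2) * (x + 1 / z) ^ (-s / 2 - 1)) atTop
      (nhds (∫ x in Set.Ioo (0:ℝ) 1, x ^ (α/2-1) * (1-x) ^ (-α/2))) := by
    refine tendsto_integral_filter_of_dominated_convergence
      (fun x => x ^ (α/2-1) * (1-x) ^ (-α/2)) ?_ ?_ ?_ ?_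
    · filter_upwards [eventually_gt_atTop (0:ℝ)] with z hz
      exact (hint (1/z) (by positivity)).aestronglyMeasurable
    · filter_upwards [eventually_gt_atTop (0:ℝ)] with z hz
      rw [ae_restrict_iff' measurableSet_Ioo]
      refine Filter.Eventually.of_forall fun x hx => ?_
      obtain ⟨hx0, hx1⟩ := hx
      have h1x : (0:ℝ) < 1 - x := by linarith
      have hw : (0:ℝ) < 1/z := by positivity
      rw [Real.norm_eq_abs, abs_of_nonneg (by positivity)]
      have key : (x+1/z) ^ (-s/2-1) ≤ x ^ (-s/2-1) :=
        Real.rpow_le_rpow_of_nonpos hx0 (by linarith) (by linarith)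
      have e : x ^ ((d:ℝ)/2) * x ^ (-s/2-1) = x ^ (α/2-1) := by
        rw [← Real.rpow_add hx0]
        congr 1
        rw [hα]; ring
      calc x ^ ((d:ℝ)/2) * (1-x) ^ (-α/2) * (x+1/z) ^ (-s/2-1)
          ≤ x ^ ((d:ℝ)/2) * (1-x) ^ (-α/2) * x ^ (-s/2-1) :=
            mul_le_mul_of_nonneg_left key (by positivity)
        _ = x ^ (α/2-1) * (1-x) ^ (-α/2) := by rw [← e]; ring
    · exact integrableOn_rpow_mul_rpow (by linarith) (by linarith)
    · rw [ae_restrict_iff' measurableSet_Ioo]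
      refine Filter.Eventually.of_forall fun x hx' => ?_
      obtain ⟨hx0, hx1⟩ := hx'
      have t1 : Tendsto (fun z : ℝ => x + 1/z) atTop (nhds x) := by
        have h := Filter.Tendsto.const_add x (tendsto_inv_atTop_zero (𝕜 := ℝ))
        simpa [one_div] using h
      have t2 := (Real.continuousAt_rpow_const x (-s/2-1) (Or.inl hx0.ne')).tendsto
      have t3 := t2.comp t1
      have t4 := t3.const_mul (x ^ ((d:ℝ)/2) * (1-x) ^ (-α/2))
      have e : x ^ ((d:ℝ)/2) * x ^ (-s/2-1) = x ^ (α/2-1) := by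
        rw [← Real.rpow_add hx0]
        congr 1
        rw [hα]; ring
      rw [show x ^ (α/2-1) * (1-x) ^ (-α/2)
          = x ^ ((d:ℝ)/2) * (1-x) ^ (-α/2) * x ^ (-s/2-1) by rw [← e]; ring]
      exact t4
  have hval : C * (∫ x in Set.Ioo (0:ℝ) 1, x ^ (α/2-1) * (1-x) ^ (-α/2))
      = Real.Gamma (α / 2) * Real.Gamma (1 + s / 2) / Real.Gamma ((d : ℝ) / 2) := by
    rw [hbeta2, hCdef, div_mul_eq_mul_div, eq_div_iff hΓb.ne',
      div_mul_eq_mul_div, div_eq_iff (by positivity : Real.Gamma ((d:ℝ)/2) * Real.Gamma (1-α/2) ≠ 0)]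
    ring
  have hlimtop : Tendsto G atTop
      (nhds (Real.Gamma (α / 2) * Real.Gamma (1 + s / 2) / Real.Gamma ((d : ℝ) / 2))) := by
    have h1 : Tendsto (fun z : ℝ => C * ∫ x in Set.Ioo (0:ℝ) 1,
        x ^ ((d : ℝ) / 2) * (1 - x) ^ (-α / 2) * (x + 1 / z) ^ (-s / 2 - 1)) atTop
        (nhds (Real.Gamma (α / 2) * Real.Gamma (1 + s / 2) / Real.Gamma ((d : ℝ) / 2))) := by
      rw [← hval]
      exact hDCT.const_mul C
    refine h1.congr' ?_
    filter_upwards [eventually_gt_atTop (0:ℝ)] with z hz using (hrep z hz).symm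
  exact ⟨hrep, hmono, hlim0, hlimtop⟩
end

section
/- Let $d \geq 2$, $0 < s < d$, $R > 0$, $y_{d+1} > 0$, and let $\omega_R$ be the measure on the ball $B_R \subset \mathbb{R}^d$ with density $\omega_R'(x) = \frac{c_R}{(R^2-|x|^2)^{\alpha/2}}$, where $\alpha = d-s$ and $c_R = \frac{\pi^{-d/2}\Gamma(1+s/2)}{R^s \Gamma(1-\alpha/2)}$ (assume $d-2 < s < d$). Then the Riesz $s$-potential of $\omega_R$ at the point $y = (0,\dots,0,y_{d+1}) \in \mathbb{R}^{d+1}$ equals $U^{\omega_R}(y) = y_{d+1}^{-s}\, {}_2F_1\left(\frac{s}{2},\frac{d}{2},1+\frac{s}{2},-\frac{R^2}{y_{d+1}^2}\right)$. -/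
open MeasureTheory

set_option maxHeartbeats 2000000 in
theorem stmt11 (d : ℕ) (hd : 2 ≤ d) (s : ℝ) (hs : (d : ℝ) - 2 < s) (hsd : s < (d : ℝ))
    (α : ℝ) (hα : α = (d : ℝ) - s) (R : ℝ) (hR : 0 < R) (c : ℝ) (hc : 0 < c)
    (cR : ℝ) (hcR : cR = Real.pi ^ (-(d : ℝ) / 2) * Real.Gamma (1 + s / 2) /
      (R ^ s * Real.Gamma (1 - α / 2))) :
    ∫ x in Metric.ball (0 : EuclideanSpace ℝ (Fin d)) R,
        (cR / (R ^ 2 - ‖x‖ ^ 2) ^ (α / 2)) * (‖x‖ ^ 2 + c ^ 2) ^ (-s / 2) =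
      c ^ (-s) * twoF1 (s / 2) ((d : ℝ) / 2) (1 + s / 2) (-(R ^ 2 / c ^ 2)) := by
  classical
  haveI : Nonempty (Fin d) := ⟨⟨0, by omega⟩⟩
  have hd2 : (2:ℝ) ≤ (d:ℝ) := by exact_mod_cast hd
  have hs0 : 0 < s := by linarith
  have hα0 : 0 < α := by rw [hα]; linarith
  have hα2 : α < 2 := by rw [hα]; linarith
  have hdα : (d:ℝ) = s + α := by rw [hα]; ring
  obtain ⟨h, hh⟩ : ∃ h : ℝ → ℝ,
      h = fun r => cR / (R ^ 2 - r ^ 2) ^ (α / 2) * (r ^ 2 + c ^ 2) ^ (-s / 2) := ⟨_, rfl⟩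
  obtain ⟨z, hz⟩ : ∃ z : ℝ, z = -(R ^ 2 / c ^ 2) := ⟨_, rfl⟩
  rw [show (∫ x in Metric.ball (0 : EuclideanSpace ℝ (Fin d)) R,
        (cR / (R ^ 2 - ‖x‖ ^ 2) ^ (α / 2)) * (‖x‖ ^ 2 + c ^ 2) ^ (-s / 2)) =
      ∫ x in Metric.ball (0 : EuclideanSpace ℝ (Fin d)) R, h ‖x‖ from by simp only [hh]]
  rw [← hz]
  -- Step A : polar coordinates
  have stepA : (∫ x in Metric.ball (0 : EuclideanSpace ℝ (Fin d)) R, h ‖x‖) =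
      (d : ℝ) * (volume (Metric.ball (0 : EuclideanSpace ℝ (Fin d)) 1)).toReal *
        ∫ y in Set.Ioo (0:ℝ) R, y ^ (d - 1) * h y := by
    have e1 : ∫ x in Metric.ball (0 : EuclideanSpace ℝ (Fin d)) R, h ‖x‖ =
        ∫ x : EuclideanSpace ℝ (Fin d), (Set.Iio R).indicator h ‖x‖ := by
      rw [← integral_indicator measurableSet_ball]
      congr 1
      ext x
      rw [Set.indicator_apply, Set.indicator_apply]
      simp [mem_ball_zero_iff]
    rw [e1, integral_fun_norm_addHaar (volume : Measure (EuclideanSpace ℝ (Fin d)))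
      ((Set.Iio R).indicator h)]
    simp only [finrank_euclideanSpace_fin, smul_eq_mul, nsmul_eq_mul]
    rw [show (∫ y in Set.Ioi (0:ℝ), y ^ (d - 1) * (Set.Iio R).indicator h y) =
        ∫ y in Set.Ioi (0:ℝ), (Set.Iio R).indicator (fun y => y ^ (d-1) * h y) y from ?_,
      setIntegral_indicator measurableSet_Iio, Set.Ioi_inter_Iio]
    · rw [measureReal_def]; ring
    · congr 1
      ext y
      rw [Set.indicator_apply, Set.indicator_apply]
      split <;> simp
  -- Step B : change of variables y = R √t
  have himg : (fun t => R * Real.sqrt t) '' Set.Ioo 0 1 = Set.Ioo 0 R := by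
    ext r
    constructor
    · rintro ⟨t, ⟨ht0, ht1⟩, rfl⟩
      have hu : 0 < Real.sqrt t := Real.sqrt_pos.2 ht0
      have hu1 : Real.sqrt t < 1 := by
        rw [show (1:ℝ) = Real.sqrt 1 by simp]
        exact Real.sqrt_lt_sqrt ht0.le ht1
      exact ⟨by positivity, by simpa using (mul_lt_mul_of_pos_left hu1 hR).trans_eq (mul_one R)⟩
    · rintro ⟨hr0, hrR⟩
      refine ⟨(r/R)^2, ⟨by positivity, ?_⟩, ?_⟩
      · have : r / R < 1 := (div_lt_one hR).2 hrR
        nlinarith [div_pos hr0 hR]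
      · show R * Real.sqrt ((r/R)^2) = r
        rw [Real.sqrt_sq (by positivity)]
        field_simp
  have hderiv : ∀ t ∈ Set.Ioo (0:ℝ) 1, HasDerivWithinAt (fun t => R * Real.sqrt t)
      (R / (2 * Real.sqrt t)) (Set.Ioo 0 1) t := by
    intro t ht
    have := ((Real.hasDerivAt_sqrt ht.1.ne').const_mul R).hasDerivWithinAt (s := Set.Ioo 0 1)
    exact this.congr_deriv (by ring)
  have hinj : Set.InjOn (fun t => R * Real.sqrt t) (Set.Ioo 0 1) := by
    intro a ha b hb hab
    have := mul_left_cancel₀ hR.ne' hab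
    exact (Real.sqrt_inj ha.1.le hb.1.le).1 this
  have stepB : (∫ y in Set.Ioo (0:ℝ) R, y ^ (d-1) * h y) =
      ∫ t in Set.Ioo (0:ℝ) 1, |R / (2 * Real.sqrt t)| •
        ((R * Real.sqrt t) ^ (d-1) * h (R * Real.sqrt t)) := by
    rw [← himg, integral_image_eq_integral_abs_deriv_smul measurableSet_Ioo hderiv hinj]
  -- Step C : pointwise identification of the integrand
  have stepC : ∀ t ∈ Set.Ioo (0:ℝ) 1, |R / (2 * Real.sqrt t)| •
      ((R * Real.sqrt t) ^ (d-1) * h (R * Real.sqrt t)) =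
      (cR * (R ^ s * c ^ (-s)) / 2) *
        (t ^ ((d:ℝ)/2 - 1) * (1-t) ^ (1 + s/2 - (d:ℝ)/2 - 1) * (1 - z*t) ^ (-(s/2))) := by
    intro t ht
    obtain ⟨ht0, ht1⟩ := ht
    simp only [hh]
    rw [show (1 + s/2 - (d:ℝ)/2 - 1 : ℝ) = -(α/2) by rw [hα]; ring]
    have h1t : (0:ℝ) < 1 - t := by linarith
    have hu : 0 < Real.sqrt t := Real.sqrt_pos.2 ht0
    have hzt : (0:ℝ) < 1 - z * t := by
      rw [hz]
      have : 0 ≤ R^2/c^2 * t := by positivity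
      nlinarith
    have hsq : (R * Real.sqrt t) ^ 2 = R^2 * t := by
      rw [mul_pow, Real.sq_sqrt ht0.le]
    have h2 : (R^2 - R^2 * t) ^ (α/2) = R ^ α * (1-t) ^ (α/2) := by
      rw [show R^2 - R^2*t = R^2*(1-t) by ring,
        Real.mul_rpow (by positivity) h1t.le, ← Real.rpow_natCast R 2,
        ← Real.rpow_mul hR.le]
      norm_num
      left; ring_nf
    have h3 : (R^2 * t + c^2) ^ (-s/2) = c ^ (-s) * (1 - z*t) ^ (-s/2) := by
      rw [show R^2*t + c^2 = c^2 * (1 - z*t) by rw [hz]; field_simp; ring,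
        Real.mul_rpow (by positivity) hzt.le, ← Real.rpow_natCast c 2,
        ← Real.rpow_mul hc.le]
      norm_num
      left; ring_nf
    have h4 : Real.sqrt t ^ (d - 1) = t ^ ((d:ℝ)/2 - 1) * Real.sqrt t := by
      have hd1 : d - 1 = (d - 2) + 1 := by omega
      rw [hd1, pow_succ, Real.sqrt_eq_rpow, ← Real.rpow_natCast (t ^ ((1:ℝ)/2)) (d-2),
        ← Real.rpow_mul ht0.le]
      congr 2
      rw [Nat.cast_sub hd]
      push_cast
      ring
    have h5 : R ^ (d - 1) * R = R ^ s * R ^ α := by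
      rw [← pow_succ, show d - 1 + 1 = d by omega, ← Real.rpow_natCast R d, hdα,
        Real.rpow_add hR]
    have hRα : (0:ℝ) < R ^ α := Real.rpow_pos_of_pos hR _
    have h1tα : (0:ℝ) < (1-t) ^ (α/2) := Real.rpow_pos_of_pos h1t _
    have hzts : (0:ℝ) < (1 - z*t) ^ (s/2) := Real.rpow_pos_of_pos hzt _
    have h5' : (R:ℝ) ^ (d - 1) = R ^ s * R ^ α / R := by
      rw [eq_div_iff hR.ne']; exact h5
    have habs : |R / (2 * Real.sqrt t)| = R / (2 * Real.sqrt t) := abs_of_pos (by positivity)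
    rw [smul_eq_mul, habs, hsq, h2, h3, mul_pow, h4, h5',
      Real.rpow_neg h1t.le (α/2),
      show (-s/2 : ℝ) = -(s/2) by ring, Real.rpow_neg hzt.le (s/2)]
    field_simp
  rw [stepA, stepB, setIntegral_congr_fun measurableSet_Ioo stepC, integral_const_mul]
  rw [twoF1]
  -- the volume of the unit ball
  have hπ0 := Real.pi_pos
  have hV : (volume (Metric.ball (0:EuclideanSpace ℝ (Fin d)) 1)).toReal =
      Real.pi ^ ((d:ℝ)/2) / Real.Gamma ((d:ℝ)/2 + 1) := by
    rw [EuclideanSpace.volume_ball]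
    simp only [Fintype.card_fin, ENNReal.ofReal_one, one_pow, one_mul]
    rw [ENNReal.toReal_ofReal (by positivity)]
    congr 1
    rw [Real.sqrt_eq_rpow, ← Real.rpow_natCast (Real.pi ^ ((1:ℝ)/2)) d,
      ← Real.rpow_mul hπ0.le]
    congr 1
    ring
  rw [hV, show (1 + s/2 - (d:ℝ)/2 : ℝ) = 1 - α/2 from by rw [hα]; ring]
  have hΓd : Real.Gamma ((d:ℝ)/2 + 1) = (d:ℝ)/2 * Real.Gamma ((d:ℝ)/2) := by
    rw [Real.Gamma_add_one (by positivity)]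
  have hπ : Real.pi ^ (-(d:ℝ)/2) = (Real.pi ^ ((d:ℝ)/2))⁻¹ := by
    rw [neg_div, Real.rpow_neg hπ0.le]
  have hΓd0 : Real.Gamma ((d:ℝ)/2) ≠ 0 := (Real.Gamma_pos_of_pos (by positivity)).ne'
  have hΓα0 : Real.Gamma (1 - α/2) ≠ 0 := (Real.Gamma_pos_of_pos (by linarith)).ne'
  have hπd0 : Real.pi ^ ((d:ℝ)/2) ≠ 0 := (Real.rpow_pos_of_pos hπ0 _).ne'
  have hRs0 : R ^ s ≠ 0 := (Real.rpow_pos_of_pos hR _).ne'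
  have hd0 : (d:ℝ) ≠ 0 := by positivity
  rw [hcR, hΓd, hπ]
  have key : (d:ℝ) * (Real.pi ^ ((d:ℝ)/2) / ((d:ℝ)/2 * Real.Gamma ((d:ℝ)/2))) *
      ((Real.pi ^ ((d:ℝ)/2))⁻¹ * Real.Gamma (1 + s/2) / (R ^ s * Real.Gamma (1 - α/2)) *
        (R ^ s * c ^ (-s)) / 2) =
      c ^ (-s) * (Real.Gamma (1 + s/2) / (Real.Gamma ((d:ℝ)/2) * Real.Gamma (1 - α/2))) := by
    generalize hP : Real.pi ^ ((d:ℝ)/2) = P at hπd0 ⊢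
    generalize hRs : R ^ s = Rs at hRs0 ⊢
    generalize hG2 : Real.Gamma ((d:ℝ)/2) = G2 at hΓd0 ⊢
    generalize hG3 : Real.Gamma (1 - α/2) = G3 at hΓα0 ⊢
    field_simp
  linear_combination key * (∫ x in Set.Ioo (0:ℝ) 1,
      x ^ ((d:ℝ)/2 - 1) * (1 - x) ^ (1 - α/2 - 1) * (1 - z*x) ^ (-(s/2)))
end

section
/- Let $d \geq 2$, $0 < s < d$, $g \in (0,1)$, $y_1, y_2 > 0$, $\alpha = d-s$. Define $f(x) = \frac{(1+\gamma) y_1^{\alpha}}{(|x|^2+y_1^2)^{d-s/2}} - \frac{\gamma\, y_2^{\alpha}}{(|x|^2+y_2^2)^{d-s/2}}$ for $x \in \mathbb{R}^d$, where $\gamma > 0$ and $g = \gamma/(1+\gamma)$. Then $f(x) \geq 0$ for all $x \in \mathbb{R}^d$ if and only if $g^{1/d} \leq y_2/y_1 \leq g^{-1/\alpha}$. -/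
private lemma aux1 (e : ℝ) (he : 0 < e) (A B z₁ z₂ : ℝ) (hB : 0 < B) (hBA : B < A)
    (hz₁ : 0 < z₁) (hz₂ : 0 < z₂)
    (h : ∀ u : ℝ, 0 ≤ u → A * (u + z₁) ^ e ≤ B * (u + z₂) ^ e) : False := by
  have hA : 0 < A := hB.trans hBA
  set c := (A / B) ^ e⁻¹ with hcdef
  have hc1 : 1 < c :=
    (Real.one_lt_rpow_iff_of_pos (by positivity)).mpr
      (Or.inl ⟨(one_lt_div hB).mpr hBA, by positivity⟩)
  have hc0 : 0 < c := by linarith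
  have hcne : c - 1 ≠ 0 := ne_of_gt (by linarith)
  set u := z₂ / (c - 1) with hudef
  have hu : 0 ≤ u := div_nonneg hz₂.le (by linarith)
  have hcu : (c - 1) * u = z₂ := by
    rw [hudef, mul_comm]
    exact div_mul_cancel₀ _ hcne
  have hlt : u + z₂ < c * (u + z₁) := by nlinarith [mul_pos hc0 hz₁]
  have hce : c ^ e = A / B := Real.rpow_inv_rpow (by positivity) he.ne'
  have hstep : (u + z₂) ^ e < (A / B) * (u + z₁) ^ e := by
    have h2 := Real.rpow_lt_rpow (add_nonneg hu hz₂.le) hlt he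
    rwa [Real.mul_rpow hc0.le (add_nonneg hu hz₁.le), hce] at h2
  have hB' : B * ((A / B) * (u + z₁) ^ e) = A * (u + z₁) ^ e := by
    field_simp
  have hmul := mul_lt_mul_of_pos_left hstep hB
  rw [hB'] at hmul
  exact absurd (h u hu) (not_le.mpr hmul)

private lemma aux2 (e dr α g y₁ y₂ : ℝ) (he : 0 < e) (hdr : 0 < dr) (hα : 0 < α)
    (h2e : 2 * e = dr + α) (hg : 0 < g) (hy₁ : 0 < y₁) (hy₂ : 0 < y₂)
    (hl : g ≤ (y₂ / y₁) ^ dr) (hr : g * (y₂ / y₁) ^ α ≤ 1)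
    (u : ℝ) (hu : 0 ≤ u) :
    g * y₂ ^ α * (u + y₁ ^ 2) ^ e ≤ y₁ ^ α * (u + y₂ ^ 2) ^ e := by
  have ht : 0 < y₂ / y₁ := by positivity
  have hup1 : (0:ℝ) < u + y₁ ^ 2 := by nlinarith [pow_pos hy₁ 2]
  have hup2 : (0:ℝ) < u + y₂ ^ 2 := by nlinarith [pow_pos hy₂ 2]
  have h5 : g * (y₂ / y₁) ^ α ≤ ((u + y₂ ^ 2) / (u + y₁ ^ 2)) ^ e := by
    rcases le_total y₂ y₁ with hle | hle
    · have hsq : y₂ ^ 2 ≤ y₁ ^ 2 := by nlinarith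
      have hR : y₂ ^ 2 / y₁ ^ 2 ≤ (u + y₂ ^ 2) / (u + y₁ ^ 2) := by
        rw [div_le_div_iff₀ (by positivity) hup1]
        nlinarith [mul_le_mul_of_nonneg_right hsq hu]
      have hmono := Real.rpow_le_rpow (by positivity) hR he.le
      have hA2 : y₂ ^ 2 / y₁ ^ 2 = (y₂ / y₁) ^ (2:ℕ) := (div_pow y₂ y₁ 2).symm
      have hB2 : ((y₂ / y₁) ^ (2:ℕ)) ^ e = (y₂ / y₁) ^ dr * (y₂ / y₁) ^ α := by
        rw [← Real.rpow_natCast (y₂ / y₁) 2, ← Real.rpow_mul ht.le,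
          show ((2:ℕ):ℝ) * e = dr + α by push_cast; linarith, Real.rpow_add ht]
      rw [hA2, hB2] at hmono
      have htαpos : (0:ℝ) < (y₂ / y₁) ^ α := Real.rpow_pos_of_pos ht α
      linarith [hmono, mul_le_mul_of_nonneg_right hl htαpos.le]
    · have hR1 : 1 ≤ (u + y₂ ^ 2) / (u + y₁ ^ 2) := by
        rw [le_div_iff₀ hup1]
        nlinarith
      exact le_trans hr (Real.one_le_rpow hR1 he.le)
  rw [Real.div_rpow hy₂.le hy₁.le, Real.div_rpow hup2.le hup1.le,
    ← mul_div_assoc,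
    div_le_div_iff₀ (Real.rpow_pos_of_pos hy₁ α) (Real.rpow_pos_of_pos hup1 e)] at h5
  linarith [h5]

theorem stmt14 (d : ℕ) (hd : 2 ≤ d) (s : ℝ) (hs : 0 < s) (hsd : s < (d : ℝ))
    (α : ℝ) (hα : α = (d : ℝ) - s)
    (γ : ℝ) (hγ : 0 < γ) (g : ℝ) (hg : g = γ / (1 + γ)) (hg0 : 0 < g) (hg1 : g < 1)
    (y₁ y₂ : ℝ) (hy₁ : 0 < y₁) (hy₂ : 0 < y₂)
    (f : EuclideanSpace ℝ (Fin d) → ℝ)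
    (hf : ∀ x, f x =
      (1 + γ) * y₁ ^ α / (‖x‖ ^ 2 + y₁ ^ 2) ^ ((d : ℝ) - s / 2) -
        γ * y₂ ^ α / (‖x‖ ^ 2 + y₂ ^ 2) ^ ((d : ℝ) - s / 2)) :
    (∀ x, 0 ≤ f x) ↔
      g ^ (1 / (d : ℝ)) ≤ y₂ / y₁ ∧ y₂ / y₁ ≤ g ^ (-1 / α) := by
  have hdr : (0:ℝ) < (d:ℝ) := by exact_mod_cast (by omega : 0 < d)
  have he : (0:ℝ) < (d:ℝ) - s / 2 := by linarith
  have hα0 : 0 < α := by rw [hα]; linarith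
  have ht : 0 < y₂ / y₁ := by positivity
  have h1γ : (0:ℝ) < 1 + γ := by linarith
  have hγg : γ = g * (1 + γ) := by rw [hg]; field_simp
  have e2p : ((2:ℕ):ℝ) * ((d:ℝ) - s/2) = (d:ℝ) + α := by push_cast; rw [hα]; ring
  -- key reduction to a real-variable statement
  have key : (∀ x, 0 ≤ f x) ↔
      ∀ u : ℝ, 0 ≤ u →
        g * y₂ ^ α * (u + y₁ ^ 2) ^ ((d:ℝ) - s/2) ≤
          y₁ ^ α * (u + y₂ ^ 2) ^ ((d:ℝ) - s/2) := by
    constructor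
    · intro h u hu
      set x : EuclideanSpace ℝ (Fin d) :=
        EuclideanSpace.single ⟨0, by omega⟩ (Real.sqrt u) with hxdef
      have hx : ‖x‖ ^ 2 = u := by
        rw [hxdef, EuclideanSpace.norm_single, Real.norm_eq_abs, sq_abs, Real.sq_sqrt hu]
      have hfx := h x
      rw [hf x, sub_nonneg, hx] at hfx
      have h1 : (0:ℝ) < u + y₁^2 := by positivity
      have h2 : (0:ℝ) < u + y₂^2 := by positivity
      rw [div_le_div_iff₀ (Real.rpow_pos_of_pos h2 _) (Real.rpow_pos_of_pos h1 _)] at hfx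
      have h' : (1+γ) * (g * y₂^α * (u + y₁^2)^((d:ℝ)-s/2))
          ≤ (1+γ) * (y₁^α * (u + y₂^2)^((d:ℝ)-s/2)) := by
        calc (1+γ) * (g * y₂^α * (u + y₁^2)^((d:ℝ)-s/2))
            = γ * y₂^α * (u + y₁^2)^((d:ℝ)-s/2) := by
              linear_combination (-(y₂^α * (u + y₁^2)^((d:ℝ)-s/2))) * hγg
          _ ≤ (1+γ) * y₁^α * (u + y₂^2)^((d:ℝ)-s/2) := hfx
          _ = (1+γ) * (y₁^α * (u + y₂^2)^((d:ℝ)-s/2)) := by ring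
      exact le_of_mul_le_mul_left h' h1γ
    · intro h x
      have hu : (0:ℝ) ≤ ‖x‖^2 := sq_nonneg _
      have h1 : (0:ℝ) < ‖x‖^2 + y₁^2 := by positivity
      have h2 : (0:ℝ) < ‖x‖^2 + y₂^2 := by positivity
      have hh := h (‖x‖^2) hu
      rw [hf x, sub_nonneg,
        div_le_div_iff₀ (Real.rpow_pos_of_pos h2 _) (Real.rpow_pos_of_pos h1 _)]
      calc γ * y₂^α * (‖x‖^2 + y₁^2)^((d:ℝ)-s/2)
          = (1+γ) * (g * y₂^α * (‖x‖^2 + y₁^2)^((d:ℝ)-s/2)) := by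
            linear_combination (y₂^α * (‖x‖^2 + y₁^2)^((d:ℝ)-s/2)) * hγg
        _ ≤ (1+γ) * (y₁^α * (‖x‖^2 + y₂^2)^((d:ℝ)-s/2)) :=
            mul_le_mul_of_nonneg_left hh h1γ.le
        _ = (1+γ) * y₁^α * (‖x‖^2 + y₂^2)^((d:ℝ)-s/2) := by ring
  have iff1 : g ^ (1/(d:ℝ)) ≤ y₂/y₁ ↔ g ≤ (y₂/y₁) ^ (d:ℝ) := by
    rw [one_div]; exact Real.rpow_inv_le_iff_of_pos hg0.le ht.le hdr
  have iff2 : y₂/y₁ ≤ g ^ (-1/α) ↔ g * (y₂/y₁) ^ α ≤ 1 := by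
    have e1 : g ^ (-1/α) = (g⁻¹) ^ α⁻¹ := by
      rw [show (-1/α : ℝ) = (-1) * α⁻¹ by ring, Real.rpow_mul hg0.le, Real.rpow_neg_one]
    rw [e1, Real.le_rpow_inv_iff_of_pos ht.le (by positivity) hα0]
    constructor
    · intro hh
      have := mul_le_mul_of_nonneg_left hh hg0.le
      rwa [mul_inv_cancel₀ hg0.ne'] at this
    · intro hh
      have := mul_le_mul_of_nonneg_left hh (inv_nonneg.mpr hg0.le)
      rwa [mul_one, ← mul_assoc, inv_mul_cancel₀ hg0.ne', one_mul] at this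
  rw [key, iff1, iff2]
  constructor
  · intro h
    constructor
    · -- lower bound, from u = 0
      have h0 := h 0 le_rfl
      rw [zero_add, zero_add] at h0
      have e₁ : (y₁^2)^((d:ℝ)-s/2) = y₁^((d:ℝ)) * y₁^α := by
        rw [← Real.rpow_natCast y₁ 2, ← Real.rpow_mul hy₁.le, e2p, Real.rpow_add hy₁]
      have e₂ : (y₂^2)^((d:ℝ)-s/2) = y₂^((d:ℝ)) * y₂^α := by
        rw [← Real.rpow_natCast y₂ 2, ← Real.rpow_mul hy₂.le, e2p, Real.rpow_add hy₂]
      rw [e₁, e₂] at h0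
      rw [Real.div_rpow hy₂.le hy₁.le, le_div_iff₀ (Real.rpow_pos_of_pos hy₁ _)]
      have h0' : (g * y₁^((d:ℝ))) * (y₂^α * y₁^α) ≤ y₂^((d:ℝ)) * (y₂^α * y₁^α) := by
        calc (g * y₁^((d:ℝ))) * (y₂^α * y₁^α)
            = g * y₂^α * (y₁^((d:ℝ)) * y₁^α) := by ring
          _ ≤ y₁^α * (y₂^((d:ℝ)) * y₂^α) := h0
          _ = y₂^((d:ℝ)) * (y₂^α * y₁^α) := by ring
      exact le_of_mul_le_mul_right h0' (by positivity)
    · -- upper bound, by contradiction using large u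
      by_contra hc
      push_neg at hc
      rw [Real.div_rpow hy₂.le hy₁.le, ← mul_div_assoc,
        lt_div_iff₀ (Real.rpow_pos_of_pos hy₁ α), one_mul] at hc
      exact absurd h (by
        intro h'
        exact aux1 ((d:ℝ) - s/2) he (g * y₂^α) (y₁^α) (y₁^2) (y₂^2)
          (Real.rpow_pos_of_pos hy₁ α) hc (pow_pos hy₁ 2) (pow_pos hy₂ 2) h')
  · rintro ⟨h1, h2⟩ u hu
    exact aux2 ((d:ℝ) - s/2) (d:ℝ) α g y₁ y₂ he hdr hα0 (by rw [hα]; ring)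
      hg0 hy₁ hy₂ h1 h2 u hu
end
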